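/- arXiv:1211.2780 — 2 statements merged into one kernel-verified Lean document; each statement's English description precedes it below -/
import Mathlib

section
/- Let (Yᵢ)_{i≥1} be identically distributed real random variables such that E[exp(λ|Y₁|^µ)] < ∞ for some λ > 0 and µ > 0. Then for every p ≥ 1, E[max_{1≤i≤n} |Yᵢ|^p] = O((ln n)^{p/µ}) as n → ∞; that is, there exists a constant C > 0 such that E[max_{1≤i≤n} |Yᵢ|^p] ≤ C (ln n)^{p/µ} for all n ≥ 2. -/
open MeasureTheory ProbabilityTheory Filter Real

theorem stmt_18
    {Ω : Type*} {mΩ : MeasurableSpace Ω} (μ : Measure Ω) [IsProbabilityMeasure μ]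
    (Y : ℕ → Ω → ℝ) (hYmeas : ∀ i, Measurable (Y i))
    (hident : ∀ i, 1 ≤ i → IdentDistrib (Y i) (Y 1) μ μ)
    (lam mu : ℝ) (hlam : 0 < lam) (hmu : 0 < mu)
    (hexp : Integrable (fun ω => Real.exp (lam * |Y 1 ω| ^ mu)) μ)
    (p : ℝ) (hp : 1 ≤ p)
    :
    ∃ C > (0:ℝ), ∀ n : ℕ, 2 ≤ n →
      (∫ ω, (⨆ i ∈ Finset.Icc 1 n, |Y i ω| ^ p) ∂μ) ≤ C * (Real.log n) ^ (p / mu) := by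
  set q : ℝ := p / mu with hq
  have hq0 : 0 < q := div_pos (lt_of_lt_of_le one_pos hp) hmu
  set c : ℝ := Real.exp (-q) * (q / lam) ^ q with hcdef
  have hc : (0:ℝ) < c := by positivity
  -- the key pointwise bound x^q ≤ c * exp(lam * x)
  have key : ∀ x : ℝ, 0 ≤ x → x ^ q ≤ c * Real.exp (lam * x) := by
    intro x hx
    rcases eq_or_lt_of_le hx with h | h
    · rw [← h, Real.zero_rpow hq0.ne']
      positivity
    · have hpos : 0 < lam * x / q := by positivity
      have hl := Real.log_le_sub_one_of_pos hpos
      have h1 : (lam * x / q) ^ q ≤ Real.exp (-q) * Real.exp (lam * x) := by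
        rw [Real.rpow_def_of_pos hpos, ← Real.exp_add]
        apply Real.exp_le_exp.mpr
        have hqx : q * (lam * x / q) = lam * x := by field_simp
        nlinarith [mul_le_mul_of_nonneg_left hl hq0.le]
      have h2 : x ^ q = (lam * x / q) ^ q * (q / lam) ^ q := by
        rw [← Real.mul_rpow hpos.le (by positivity)]
        congr 1
        field_simp
      rw [h2, hcdef]
      calc (lam * x / q) ^ q * (q / lam) ^ q
          ≤ (Real.exp (-q) * Real.exp (lam * x)) * (q / lam) ^ q :=
            mul_le_mul_of_nonneg_right h1 (by positivity)
        _ = Real.exp (-q) * (q / lam) ^ q * Real.exp (lam * x) := by ring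
  -- measurability of the transform
  have hg : Measurable (fun x : ℝ => Real.exp (lam * |x| ^ mu)) := by
    fun_prop
  set K : ℝ := ∫ ω, Real.exp (lam * |Y 1 ω| ^ mu) ∂μ with hKdef
  have hK0 : 0 ≤ K := integral_nonneg fun ω => (Real.exp_pos _).le
  have hid : ∀ j, 1 ≤ j →
      IdentDistrib (fun ω => Real.exp (lam * |Y j ω| ^ mu))
        (fun ω => Real.exp (lam * |Y 1 ω| ^ mu)) μ μ :=
    fun j hj => (hident j hj).comp hg
  have hint : ∀ j, 1 ≤ j → Integrable (fun ω => Real.exp (lam * |Y j ω| ^ mu)) μ :=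
    fun j hj => ((hid j hj).integrable_iff).mpr hexp
  have hintK : ∀ j, 1 ≤ j → (∫ ω, Real.exp (lam * |Y j ω| ^ mu) ∂μ) = K :=
    fun j hj => (hid j hj).integral_eq
  have h2q : (0:ℝ) < (2:ℝ) ^ q := by positivity
  have hlog2 : (0:ℝ) < Real.log 2 := Real.log_pos one_lt_two
  refine ⟨(2:ℝ) ^ q / lam ^ q + (2:ℝ) ^ q * c * K / (Real.log 2) ^ q, ?_, ?_⟩
  · apply add_pos_of_pos_of_nonneg (by positivity)
    exact div_nonneg (mul_nonneg (mul_nonneg h2q.le hc.le) hK0) (by positivity)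
  intro n hn
  have hn0 : (0:ℝ) < n := by positivity
  have hn2 : (2:ℝ) ≤ n := by exact_mod_cast hn
  have hlogn : Real.log 2 ≤ Real.log n := Real.log_le_log (by norm_num) hn2
  have hlogn0 : 0 < Real.log n := lt_of_lt_of_le hlog2 hlogn
  set A : ℝ := Real.log n / lam with hAdef
  have hA0 : 0 ≤ A := by positivity
  set F : Ω → ℝ := fun ω => ∑ j ∈ Finset.Icc 1 n, Real.exp (lam * |Y j ω| ^ mu) with hFdef
  have hF0 : ∀ ω, 0 ≤ F ω := fun ω => Finset.sum_nonneg fun _ _ => (Real.exp_pos _).le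
  have hFint : Integrable F μ :=
    integrable_finset_sum _ fun j hj => hint j (Finset.mem_Icc.mp hj).1
  set B : Ω → ℝ := fun ω => (2:ℝ) ^ q * (A ^ q + c * (n:ℝ)⁻¹ * F ω) with hBdef
  have hBint : Integrable B μ :=
    (((integrable_const _).add (hFint.const_mul _)).const_mul _)
  -- pointwise bound of the supremum
  have hSB : ∀ ω, (⨆ i ∈ Finset.Icc 1 n, |Y i ω| ^ p) ≤ B ω := by
    intro ω
    have hB0 : 0 ≤ B ω := by
      apply mul_nonneg h2q.le
      apply add_nonneg (Real.rpow_nonneg hA0 q)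
      exact mul_nonneg (mul_nonneg hc.le (by positivity)) (hF0 ω)
    refine Real.iSup_le (fun i => Real.iSup_le (fun hi => ?_) hB0) hB0
    set z : ℝ := |Y i ω| ^ mu with hzdef
    have hz0 : 0 ≤ z := Real.rpow_nonneg (abs_nonneg _) _
    have hmup : mu * q = p := by rw [hq]; field_simp
    have h1 : |Y i ω| ^ p = z ^ q := by
      rw [← hmup, Real.rpow_mul (abs_nonneg _)]
    set R : ℝ := max (z - A) 0 with hRdef
    have hR0 : 0 ≤ R := le_max_right _ _
    have h2 : z ≤ A + R := by
      have := le_max_left (z - A) 0; linarith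
    have h3 : z ^ q ≤ (A + R) ^ q := Real.rpow_le_rpow hz0 h2 hq0.le
    have h4 : (A + R) ^ q ≤ (2:ℝ) ^ q * (A ^ q + R ^ q) := by
      have hm : A + R ≤ 2 * max A R := by
        have := le_max_left A R; have := le_max_right A R; linarith
      calc (A + R) ^ q ≤ (2 * max A R) ^ q :=
            Real.rpow_le_rpow (add_nonneg hA0 hR0) hm hq0.le
        _ = (2:ℝ) ^ q * (max A R) ^ q :=
            Real.mul_rpow (by norm_num) (le_trans hA0 (le_max_left _ _))
        _ ≤ (2:ℝ) ^ q * (A ^ q + R ^ q) := by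
            apply mul_le_mul_of_nonneg_left _ h2q.le
            rcases max_cases A R with ⟨he, _⟩ | ⟨he, _⟩ <;> rw [he]
            · nlinarith [Real.rpow_nonneg hR0 q]
            · nlinarith [Real.rpow_nonneg hA0 q]
    have h5 : R ^ q ≤ c * Real.exp (lam * (z - A)) := by
      rcases le_total z A with h | h
      · have hRz : R = 0 := max_eq_right (by linarith)
        rw [hRz, Real.zero_rpow hq0.ne']
        positivity
      · have hRz : R = z - A := max_eq_left (by linarith)
        rw [hRz]; exact key (z - A) (by linarith)
    have h6 : Real.exp (lam * (z - A)) = (n:ℝ)⁻¹ * Real.exp (lam * z) := by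
      have hlA : lam * A = Real.log n := by
        rw [hAdef]; field_simp
      rw [mul_sub, Real.exp_sub, hlA, Real.exp_log hn0]
      ring
    have h7 : Real.exp (lam * z) ≤ F ω := by
      exact Finset.single_le_sum (f := fun j => Real.exp (lam * |Y j ω| ^ mu))
        (fun j _ => (Real.exp_pos _).le) hi
    calc |Y i ω| ^ p = z ^ q := h1
      _ ≤ (A + R) ^ q := h3
      _ ≤ (2:ℝ) ^ q * (A ^ q + R ^ q) := h4
      _ ≤ (2:ℝ) ^ q * (A ^ q + c * ((n:ℝ)⁻¹ * Real.exp (lam * z))) := by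
          apply mul_le_mul_of_nonneg_left _ h2q.le
          apply add_le_add (le_refl _)
          rw [← h6]; exact h5
      _ ≤ (2:ℝ) ^ q * (A ^ q + c * (n:ℝ)⁻¹ * F ω) := by
          apply mul_le_mul_of_nonneg_left _ h2q.le
          apply add_le_add (le_refl _)
          have : c * (n:ℝ)⁻¹ * Real.exp (lam * z) ≤ c * (n:ℝ)⁻¹ * F ω :=
            mul_le_mul_of_nonneg_left h7 (by positivity)
          linarith
      _ = B ω := rfl
  have hS0 : ∀ ω, 0 ≤ (⨆ i ∈ Finset.Icc 1 n, |Y i ω| ^ p) := fun ω =>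
    Real.iSup_nonneg fun i => Real.iSup_nonneg fun _ => Real.rpow_nonneg (abs_nonneg _) _
  have hle : (∫ ω, (⨆ i ∈ Finset.Icc 1 n, |Y i ω| ^ p) ∂μ) ≤ ∫ ω, B ω ∂μ :=
    integral_mono_of_nonneg (ae_of_all _ hS0) hBint (ae_of_all _ hSB)
  -- compute the integral of B
  have hintF : (∫ ω, F ω ∂μ) = (n:ℝ) * K := by
    rw [hFdef]
    rw [integral_finset_sum _ fun j hj => hint j (Finset.mem_Icc.mp hj).1]
    rw [Finset.sum_congr rfl fun j hj => hintK j (Finset.mem_Icc.mp hj).1]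
    rw [Finset.sum_const, Nat.card_Icc]
    simp [nsmul_eq_mul]
  have hintB : (∫ ω, B ω ∂μ) = (2:ℝ) ^ q * A ^ q + (2:ℝ) ^ q * c * K := by
    rw [hBdef]
    rw [integral_const_mul]
    rw [integral_add (integrable_const _) (hFint.const_mul _)]
    rw [integral_const_mul, hintF, integral_const]
    have : (n:ℝ)⁻¹ * ((n:ℝ) * K) = K := by field_simp
    simp only [probReal_univ, measure_univ, ENNReal.toReal_one, smul_eq_mul, one_mul]
    rw [mul_assoc c, this]
    ring
  -- final arithmetic
  have hAq : A ^ q = (Real.log n) ^ q / lam ^ q := Real.div_rpow hlogn0.le hlam.le q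
  have hlogq : (Real.log 2) ^ q ≤ (Real.log n) ^ q :=
    Real.rpow_le_rpow hlog2.le hlogn hq0.le
  have hterm2 : (2:ℝ) ^ q * c * K ≤ ((2:ℝ) ^ q * c * K / (Real.log 2) ^ q) * (Real.log n) ^ q := by
    have hl2q : (0:ℝ) < (Real.log 2) ^ q := by positivity
    have hD0 : 0 ≤ (2:ℝ) ^ q * c * K / (Real.log 2) ^ q :=
      div_nonneg (mul_nonneg (mul_nonneg h2q.le hc.le) hK0) hl2q.le
    have h := mul_le_mul_of_nonneg_left hlogq hD0
    rwa [div_mul_cancel₀ _ hl2q.ne'] at h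
  calc (∫ ω, (⨆ i ∈ Finset.Icc 1 n, |Y i ω| ^ p) ∂μ)
      ≤ ∫ ω, B ω ∂μ := hle
    _ = (2:ℝ) ^ q * A ^ q + (2:ℝ) ^ q * c * K := hintB
    _ = ((2:ℝ) ^ q / lam ^ q) * (Real.log n) ^ q + (2:ℝ) ^ q * c * K := by
        rw [hAq]; ring
    _ ≤ ((2:ℝ) ^ q / lam ^ q) * (Real.log n) ^ q
        + ((2:ℝ) ^ q * c * K / (Real.log 2) ^ q) * (Real.log n) ^ q := by linarith
    _ = ((2:ℝ) ^ q / lam ^ q + (2:ℝ) ^ q * c * K / (Real.log 2) ^ q) * (Real.log n) ^ q := by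
        ring
end

section
/- Under assumption (H5), with b_n = (δ ln n)^{1/µ} for any fixed δ > 2/λ, the truncation is asymptotically negligible at the iterated-logarithm rate: almost surely, [n F(h_n)/ln ln n]^{1/2} · |φ_n^[ℓ](χ) − φ̃_n^[ℓ](χ)| → 0 as n → ∞. -/
open MeasureTheory ProbabilityTheory Filter Real

theorem stmt_19
    {Ω : Type*} {mΩ : MeasurableSpace Ω} (μ : Measure Ω) [IsProbabilityMeasure μ]
    {E : Type*} [AddCommGroup E] [Module ℝ E] [MeasurableSpace E]
    (nrm : Seminorm ℝ E) (χ : E)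
    (X : ℕ → Ω → E) (Y : ℕ → Ω → ℝ)
    (hXmeas : ∀ i, Measurable (X i)) (hYmeas : ∀ i, Measurable (Y i))
    (hindep : iIndepFun (fun i ω => (X i ω, Y i ω)) μ)
    (hident : ∀ i, 1 ≤ i →
      IdentDistrib (fun ω => (X i ω, Y i ω)) (fun ω => (X 1 ω, Y 1 ω)) μ μ)
    (r : E → ℝ) (hrmeas : Measurable r)
    (σ2 : E → ℝ) (hσ2meas : Measurable σ2) (hσ2nonneg : ∀ x, 0 ≤ σ2 x)
    (ε : ℕ → Ω → ℝ) (hmodel : ∀ i ω, Y i ω = r (X i ω) + ε i ω)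
    (hcond0 : ∀ i, μ[ε i | MeasurableSpace.comap (X i) inferInstance] =ᵐ[μ] 0)
    (hcond2 : ∀ i, μ[(fun ω => (ε i ω)^2) | MeasurableSpace.comap (X i) inferInstance]
        =ᵐ[μ] (fun ω => σ2 (X i ω)))
    (F : ℝ → ℝ) (hFdef : ∀ t, F t = (μ {ω | nrm (χ - X 1 ω) ≤ t}).toReal)
    (h : ℕ → ℝ) (hhpos : ∀ i, 0 < h i) (hFpos : ∀ i, 0 < F (h i))
    (ℓ : ℝ) (hℓmem : ℓ ∈ Set.Icc (0:ℝ) 1)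
    (K : ℝ → ℝ)
    (hKnonneg : ∀ t, 0 ≤ K t) (hKbdd : ∃ C, ∀ t, K t ≤ C)
    (hKsupp : ∀ t, t ∉ Set.Icc (0:ℝ) 1 → K t = 0)
    (φn : ℕ → Ω → ℝ)
    (hφn : ∀ n ω, φn n ω =
      (∑ i ∈ Finset.Icc 1 n, Y i ω * (F (h i)) ^ (-ℓ) * K (nrm (χ - X i ω) / h i)) /
      ∑ i ∈ Finset.Icc 1 n, (F (h i)) ^ ((1:ℝ) - ℓ))
    (lam mu : ℝ) (hlam : 0 < lam) (hmu : 0 < mu)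
    (hexp : Integrable (fun ω => Real.exp (lam * |Y 1 ω| ^ mu)) μ)
    (δ : ℝ) (hδ : 2 / lam < δ)
    (b : ℕ → ℝ) (hb : ∀ n, b n = (δ * Real.log n) ^ (1 / mu))
    (φt : ℕ → Ω → ℝ)
    (hφt : ∀ n ω, φt n ω =
      (∑ i ∈ Finset.Icc 1 n,
        (Y i ω * Set.indicator {y : ℝ | |y| ≤ b n} (fun _ => (1:ℝ)) (Y i ω)) *
          (F (h i)) ^ (-ℓ) * K (nrm (χ - X i ω) / h i)) /
      ∑ i ∈ Finset.Icc 1 n, (F (h i)) ^ ((1:ℝ) - ℓ))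
    :
    ∀ᵐ ω ∂μ,
      Tendsto (fun n : ℕ =>
          Real.sqrt ((n : ℝ) * F (h n) / Real.log (Real.log n)) * |φn n ω - φt n ω|)
        atTop (nhds 0) := by
  have hδpos : 0 < δ := lt_trans (div_pos two_pos hlam) hδ
  set p : ℝ := lam * δ with hp
  have hp2 : 2 < p := by
    have := (div_lt_iff₀ hlam).mp hδ
    rw [hp]; linarith
  set C : ℝ := ∫ ω, Real.exp (lam * |Y 1 ω| ^ mu) ∂μ with hC
  have hCnn : 0 ≤ C := integral_nonneg fun ω => (Real.exp_pos _).le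
  -- measurability of the transform
  have hg : Measurable fun q : E × ℝ => Real.exp (lam * |q.2| ^ mu) :=
    ((Real.continuous_exp.comp (continuous_const.mul
      ((Real.continuous_rpow_const hmu.le).comp continuous_abs))).measurable).comp
      measurable_snd
  -- Markov bound for each i ≥ 1
  have key : ∀ i : ℕ, 1 ≤ i →
      μ {ω | b i < |Y i ω|} ≤ ENNReal.ofReal (C * (i : ℝ) ^ (-p)) := by
    intro i hi
    have hi1 : (1:ℝ) ≤ (i : ℝ) := by exact_mod_cast hi
    have hipos : (0:ℝ) < (i : ℝ) := by linarith
    have hlogi : 0 ≤ Real.log i := Real.log_nonneg hi1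
    have hbnn : 0 ≤ b i := by rw [hb]; positivity
    have hbmu : (b i) ^ mu = δ * Real.log i := by
      rw [hb, ← Real.rpow_mul (by positivity), one_div, inv_mul_cancel₀ hmu.ne', Real.rpow_one]
    have hεr : Real.exp (lam * (b i) ^ mu) = (i : ℝ) ^ p := by
      rw [hbmu, Real.rpow_def_of_pos hipos, hp]; ring_nf
    have hid : IdentDistrib (fun ω => Real.exp (lam * |Y i ω| ^ mu))
        (fun ω => Real.exp (lam * |Y 1 ω| ^ mu)) μ μ := (hident i hi).comp hg
    have hint : Integrable (fun ω => Real.exp (lam * |Y i ω| ^ mu)) μ :=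
      hid.integrable_iff.mpr hexp
    have hieq : ∫ ω, Real.exp (lam * |Y i ω| ^ mu) ∂μ = C := hid.integral_eq
    have hεpos : (0:ℝ) < (i : ℝ) ^ p := Real.rpow_pos_of_pos hipos _
    have hMarkov := mul_meas_ge_le_integral_of_nonneg
      (ae_of_all μ fun ω => (Real.exp_pos (lam * |Y i ω| ^ mu)).le) hint ((i : ℝ) ^ p)
    rw [hieq] at hMarkov
    have hsub : {ω | b i < |Y i ω|} ⊆
        {ω | (i : ℝ) ^ p ≤ Real.exp (lam * |Y i ω| ^ mu)} := by
      intro ω hω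
      have hble : b i ≤ |Y i ω| := le_of_lt hω
      have : Real.exp (lam * (b i) ^ mu) ≤ Real.exp (lam * |Y i ω| ^ mu) := by
        apply Real.exp_le_exp.mpr
        exact mul_le_mul_of_nonneg_left (Real.rpow_le_rpow hbnn hble hmu.le) hlam.le
      rw [hεr] at this
      exact this
    refine le_trans (measure_mono hsub) ?_
    rw [ENNReal.le_ofReal_iff_toReal_le (measure_ne_top μ _) (by positivity)]
    rw [Real.rpow_neg hipos.le, mul_comm C, inv_mul_eq_div, le_div_iff₀ hεpos, mul_comm]
    exact hMarkov
  -- Borel--Cantelli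
  set s : ℕ → Set Ω := fun i => {ω | b (i + 1) < |Y (i + 1) ω|} with hs
  have hsummable : Summable fun i : ℕ => C * ((i : ℝ) + 1) ^ (-p) := by
    have h1 : Summable fun n : ℕ => (n : ℝ) ^ (-p) :=
      Real.summable_nat_rpow.mpr (by linarith)
    have h2 : Summable fun n : ℕ => ((n + 1 : ℕ) : ℝ) ^ (-p) :=
      (summable_nat_add_iff 1).mpr h1
    have h3 : Summable fun n : ℕ => ((n : ℝ) + 1) ^ (-p) := by
      refine h2.congr fun n => ?_
      push_cast
      ring_nf
    exact h3.mul_left C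
  have htsum : (∑' i, μ (s i)) ≠ ⊤ := by
    have hbound : ∀ i : ℕ, μ (s i) ≤ ENNReal.ofReal (C * ((i : ℝ) + 1) ^ (-p)) := by
      intro i
      have := key (i + 1) (Nat.le_add_left 1 i)
      convert this using 3
      push_cast
      ring
    refine ne_top_of_le_ne_top ?_ (ENNReal.tsum_le_tsum hbound)
    rw [← ENNReal.ofReal_tsum_of_nonneg (fun n => by positivity) hsummable]
    exact ENNReal.ofReal_ne_top
  have hae := MeasureTheory.ae_eventually_notMem htsum
  -- b is eventually monotone and tends to infinity
  have hbmono : ∀ m n : ℕ, 1 ≤ m → m ≤ n → b m ≤ b n := by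
    intro m n hm hmn
    have hm1 : (1:ℝ) ≤ (m : ℝ) := by exact_mod_cast hm
    have hmn' : (m : ℝ) ≤ (n : ℝ) := by exact_mod_cast hmn
    rw [hb, hb]
    apply Real.rpow_le_rpow
    · have : 0 ≤ Real.log m := Real.log_nonneg hm1
      positivity
    · exact mul_le_mul_of_nonneg_left
        (Real.log_le_log (by linarith) hmn') hδpos.le
    · positivity
  have hbt : Tendsto b atTop atTop := by
    have h1 : Tendsto (fun n : ℕ => δ * Real.log n) atTop atTop :=
      (Real.tendsto_log_atTop.comp tendsto_natCast_atTop_atTop).const_mul_atTop hδpos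
    have h2 : Tendsto (fun n : ℕ => (δ * Real.log n) ^ (1 / mu)) atTop atTop :=
      (tendsto_rpow_atTop (by positivity)).comp h1
    exact h2.congr fun n => (hb n).symm
  -- main a.e. argument
  filter_upwards [hae] with ω hω
  obtain ⟨N, hN⟩ := eventually_atTop.mp hω
  set M : ℝ := ∑ i ∈ Finset.Icc 1 (N + 1), |Y i ω| with hMdef
  have hMle : ∀ i ∈ Finset.Icc 1 (N + 1), |Y i ω| ≤ M := fun i hi =>
    Finset.single_le_sum (fun j _ => abs_nonneg (Y j ω)) hi
  have hev : ∀ᶠ n in atTop, φn n ω = φt n ω := by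
    filter_upwards [hbt.eventually_ge_atTop M] with n hn
    rw [hφn, hφt]
    congr 1
    apply Finset.sum_congr rfl
    intro i hi
    obtain ⟨hi1, hi2⟩ := Finset.mem_Icc.mp hi
    have hYle : |Y i ω| ≤ b n := by
      rcases le_or_gt i (N + 1) with hc | hc
      · exact le_trans (hMle i (Finset.mem_Icc.mpr ⟨hi1, hc⟩)) hn
      · have h1 : |Y i ω| ≤ b i := by
          have h2 := hN (i - 1) (by omega)
          simp only [hs, Set.mem_setOf_eq, not_lt] at h2
          have h3 : i - 1 + 1 = i := by omega
          rwa [h3] at h2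
        exact h1.trans (hbmono i n hi1 hi2)
    have hind : Set.indicator {y : ℝ | |y| ≤ b n} (fun _ => (1:ℝ)) (Y i ω) = 1 :=
      Set.indicator_of_mem (show Y i ω ∈ {y : ℝ | |y| ≤ b n} from hYle) _
    rw [hind, mul_one]
  have heq0 : (fun n : ℕ =>
      Real.sqrt ((n : ℝ) * F (h n) / Real.log (Real.log n)) * |φn n ω - φt n ω|)
      =ᶠ[atTop] fun _ => (0:ℝ) := by
    filter_upwards [hev] with n hn
    rw [hn]
    simp
  exact Tendsto.congr' heq0.symm tendsto_const_nhds
end
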